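/- arXiv:2102.12525 — 3 statements merged into one kernel-verified Lean document; each statement's English description precedes it below -/
import Mathlib

section
/- Let S ⊆ ℝ^n be any set and let H ∈ ℝ^{m×n} satisfy S-REC(S, γ, δ̄) for some γ > 0 and δ̄ ≥ 0. Let f̃ ∈ S, let n ∈ ℝ^m, and set g = H f̃ + n. If f̂ ∈ S satisfies ‖g − H f̂‖₂ ≤ ‖g − H f‖₂ for every f ∈ S (i.e., f̂ minimizes the measurement residual over S), then ‖f̂ − f̃‖₂ ≤ (2‖n‖₂ + δ̄)/γ. -/
/-- The Euclidean (ℓ²) norm of a vector in ℝ^n. -/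
noncomputable def eNorm {n : ℕ} (x : Fin n → ℝ) : ℝ :=
  Real.sqrt (∑ i, x i ^ 2)

lemma eNorm_eq {n : ℕ} (x : Fin n → ℝ) :
    eNorm x = ‖(WithLp.equiv 2 (Fin n → ℝ)).symm x‖ := by
  rw [EuclideanSpace.norm_eq]
  simp [eNorm, sq_abs]

lemma eNorm_sub_le {n : ℕ} (x y z : Fin n → ℝ) :
    eNorm (x - z) ≤ eNorm (x - y) + eNorm (y - z) := by
  simp only [eNorm_eq]
  have : x - z = (x - y) + (y - z) := by abel
  rw [this, WithLp.equiv_symm_apply, WithLp.toLp_add]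
  exact norm_add_le _ _

lemma eNorm_sub_comm {n : ℕ} (x y : Fin n → ℝ) : eNorm (x - y) = eNorm (y - x) := by
  simp only [eNorm_eq]
  have : x - y = -(y - x) := by abel
  rw [this, WithLp.equiv_symm_apply, WithLp.toLp_neg, norm_neg]

/-- deterministic recovery bound under the set-restricted eigenvalue
condition S-REC(S, γ, δ̄). -/
theorem srec_recovery_bound {m n : ℕ} (S : Set (Fin n → ℝ))
    (H : Matrix (Fin m) (Fin n) ℝ) (γ δbar : ℝ) (hγ : 0 < γ) (hδ : 0 ≤ δbar)
    (hSREC : ∀ f₁ ∈ S, ∀ f₂ ∈ S,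
      γ * eNorm (f₁ - f₂) - δbar ≤ eNorm (H.mulVec (f₁ - f₂)))
    (ftil : Fin n → ℝ) (hftil : ftil ∈ S) (noise : Fin m → ℝ)
    (g : Fin m → ℝ) (hg : g = H.mulVec ftil + noise)
    (fhat : Fin n → ℝ) (hfhat : fhat ∈ S)
    (hmin : ∀ f ∈ S, eNorm (g - H.mulVec fhat) ≤ eNorm (g - H.mulVec f)) :
    eNorm (fhat - ftil) ≤ (2 * eNorm noise + δbar) / γ := by
  have hnoise : g - H.mulVec ftil = noise := by rw [hg]; abel
  have h1 : eNorm (g - H.mulVec fhat) ≤ eNorm noise := by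
    have := hmin ftil hftil
    rwa [hnoise] at this
  have htri : eNorm (H.mulVec fhat - H.mulVec ftil) ≤ 2 * eNorm noise := by
    calc eNorm (H.mulVec fhat - H.mulVec ftil)
        ≤ eNorm (H.mulVec fhat - g) + eNorm (g - H.mulVec ftil) := eNorm_sub_le _ _ _
      _ = eNorm (g - H.mulVec fhat) + eNorm noise := by rw [eNorm_sub_comm, hnoise]
      _ ≤ eNorm noise + eNorm noise := add_le_add h1 le_rfl
      _ = 2 * eNorm noise := by ring
  have hH : H.mulVec (fhat - ftil) = H.mulVec fhat - H.mulVec ftil := by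
    rw [Matrix.mulVec_sub]
  have h2 := hSREC fhat hfhat ftil hftil
  rw [hH] at h2
  have : γ * eNorm (fhat - ftil) ≤ 2 * eNorm noise + δbar := by linarith
  rw [le_div_iff₀ hγ]
  linarith
end

section
/- There exists a universal constant c > 0 with the following property. Let K ≥ 2 be an integer, let μ be a probability measure on ℝ^K, and let G : ℝ^K → ℝ^n be continuously differentiable with Jacobian J(w) at w. Suppose: (i) a := ∫ ‖J(w)‖_F dμ(w) > 0 and ∫ (‖J(w)‖_F − a)² dμ(w) ≤ b; (ii) for a fixed ε > 0, ∫ [sup_{‖w′−w‖₂ ≤ ε} ‖G(w′) − G(w) − J(w)(w′ − w)‖₂²] dμ(w) ≤ β² for some β ≥ 0; (iii) for some α > 1, the pushforward of μ under LReL_α is the Gaussian measure on ℝ^K with mean v̄ and positive-definite covariance Σ. Then a sample w from μ satisfies all three of: (P1) ‖J(w)‖_F ≤ √K·a; (P2) ‖G(w′) − G(w) − J(w)(w′ − w)‖₂ ≤ √K·β for all w′ with ‖w′ − w‖₂ ≤ ε; (P3) ‖Σ^{−1/2}(LReL_α(w) − v̄)‖₂ ≤ 2√K; with probability at least 1 −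 (a² + b)/(K a²) − 1/K − 2e^{−cK}. -/
open MeasureTheory ProbabilityTheory

open scoped ENNReal NNReal

/-- The leaky-ReLU map acting componentwise: `x_i ↦ x_i` if `x_i ≥ 0`, else `α * x_i`. -/
noncomputable def lrel (α : ℝ) {K : ℕ} (x : Fin K → ℝ) : Fin K → ℝ :=
  fun i => if 0 ≤ x i then x i else α * x i

/-- The Frobenius norm of a linear map `ℝ^K → ℝ^n`, computed columnwise on the
standard basis: `‖T‖_F = √(∑_j ‖T e_j‖₂²)`. -/
noncomputable def frobCLM {K n : ℕ} (T : (Fin K → ℝ) →L[ℝ] (Fin n → ℝ)) : ℝ :=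
  Real.sqrt (∑ j, ∑ i, T (Pi.single j 1) i ^ 2)


lemma pdf_mul (x : ℝ) : Real.exp (x ^ 2 / 4) * gaussianPDFReal 0 1 x
    = (Real.sqrt (2 * Real.pi))⁻¹ * Real.exp (-(1/4) * x ^ 2) := by
  rw [gaussianPDFReal]
  push_cast
  rw [mul_comm, mul_assoc, ← Real.exp_add]
  ring_nf

lemma integrable_exp_q : Integrable (fun x : ℝ => Real.exp (x ^ 2 / 4)) (gaussianReal 0 1) := by
  rw [gaussianReal_of_var_ne_zero 0 one_ne_zero,
    integrable_withDensity_iff (measurable_gaussianPDF 0 1)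
      (Filter.Eventually.of_forall fun x => ENNReal.ofReal_lt_top)]
  have : (fun x : ℝ => Real.exp (x ^ 2 / 4) * (gaussianPDF 0 1 x).toReal)
      = fun x => (Real.sqrt (2 * Real.pi))⁻¹ * Real.exp (-(1/4) * x ^ 2) := by
    funext x
    rw [gaussianPDF, ENNReal.toReal_ofReal (gaussianPDFReal_nonneg 0 1 x), pdf_mul]
  rw [this]
  exact (integrable_exp_neg_mul_sq (by norm_num)).const_mul _

lemma integral_exp_q : ∫ x, Real.exp (x ^ 2 / 4) ∂(gaussianReal 0 1) = Real.sqrt 2 := by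
  rw [gaussianReal_of_var_ne_zero 0 one_ne_zero]
  have h1 : gaussianPDF 0 1 = fun x => (((gaussianPDFReal 0 1 x).toNNReal : ℝ≥0) : ℝ≥0∞) :=
    rfl
  rw [h1, integral_withDensity_eq_integral_smul (measurable_gaussianPDFReal 0 1).real_toNNReal]
  have : (fun x : ℝ => (gaussianPDFReal 0 1 x).toNNReal • Real.exp (x ^ 2 / 4))
      = fun x => (Real.sqrt (2 * Real.pi))⁻¹ * Real.exp (-(1/4) * x ^ 2) := by
    funext x
    rw [NNReal.smul_def, smul_eq_mul, Real.coe_toNNReal _ (gaussianPDFReal_nonneg 0 1 x),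
      mul_comm, pdf_mul]
  rw [this, integral_const_mul, integral_gaussian]
  rw [← Real.sqrt_inv, ← Real.sqrt_mul (by positivity)]
  congr 1
  have : (0:ℝ) < Real.pi := Real.pi_pos
  field_simp
  ring

lemma eNorm_continuous {m : ℕ} : Continuous fun x : Fin m → ℝ => eNorm x := by
  unfold eNorm
  exact Real.continuous_sqrt.comp
    (continuous_finset_sum _ fun i _ => (continuous_apply i).pow 2)

lemma abs_le_eNorm {m : ℕ} (x : Fin m → ℝ) (i : Fin m) : |x i| ≤ eNorm x := by
  rw [← Real.sqrt_sq_eq_abs]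
  exact Real.sqrt_le_sqrt (Finset.single_le_sum (fun j _ => sq_nonneg (x j))
    (Finset.mem_univ i))

lemma eNorm_sq {m : ℕ} (x : Fin m → ℝ) : eNorm x ^ 2 = ∑ i, x i ^ 2 :=
  Real.sq_sqrt (Finset.sum_nonneg fun i _ => sq_nonneg _)

lemma eNorm_nonneg {m : ℕ} (x : Fin m → ℝ) : 0 ≤ eNorm x := Real.sqrt_nonneg _

lemma bddAbove_local_lin {K n : ℕ} (G : (Fin K → ℝ) → (Fin n → ℝ)) (hG : ContDiff ℝ 1 G)
    (ε : ℝ) (hε : 0 < ε) (w : Fin K → ℝ) :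
    BddAbove (Set.range fun w' : {u : Fin K → ℝ // eNorm (u - w) ≤ ε} =>
      eNorm (G w'.1 - G w - fderiv ℝ G w (w'.1 - w)) ^ 2) := by
  have hcont : Continuous fun u : Fin K → ℝ =>
      eNorm (G u - G w - fderiv ℝ G w (u - w)) ^ 2 := by
    apply Continuous.pow
    apply eNorm_continuous.comp
    exact (hG.continuous.sub continuous_const).sub
      ((fderiv ℝ G w).continuous.comp (continuous_id.sub continuous_const))
  have hcomp : IsCompact {u : Fin K → ℝ | eNorm (u - w) ≤ ε} := by
    apply Metric.isCompact_of_isClosed_isBounded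
    · exact isClosed_le (eNorm_continuous.comp (continuous_id.sub continuous_const))
        continuous_const
    · rw [Metric.isBounded_iff_subset_closedBall w]
      refine ⟨ε, fun u hu => ?_⟩
      rw [Metric.mem_closedBall, dist_pi_le_iff hε.le]
      intro i
      rw [Real.dist_eq]
      have h1 := abs_le_eNorm (u - w) i
      simp only [Pi.sub_apply] at h1
      exact h1.trans hu
  have h := (hcomp.image hcont).bddAbove
  rwa [Set.image_eq_range] at h

lemma gauss_pi_aux (K : ℕ) :
    Integrable (fun x : Fin K → ℝ => ∏ i, Real.exp ((x i) ^ 2 / 4))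
      (Measure.pi fun _ : Fin K => gaussianReal 0 1) ∧
    ∫ x : Fin K → ℝ, ∏ i, Real.exp ((x i) ^ 2 / 4)
      ∂(Measure.pi fun _ : Fin K => gaussianReal 0 1) = Real.sqrt 2 ^ K := by
  letI : MeasureSpace ℝ := ⟨gaussianReal 0 1⟩
  haveI : SigmaFinite (volume : Measure ℝ) := by
    change SigmaFinite (gaussianReal 0 1); infer_instance
  have hvol : (volume : Measure (Fin K → ℝ)) = Measure.pi fun _ : Fin K => gaussianReal 0 1 := by
    rw [volume_pi]; rfl
  constructor
  · rw [← hvol]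
    exact Integrable.fintype_prod (f := fun _ : Fin K => fun x : ℝ => Real.exp (x ^ 2 / 4))
      fun i => integrable_exp_q
  · rw [← hvol]
    rw [volume_pi, integral_fintype_prod_eq_pow (fun x : ℝ => Real.exp (x ^ 2 / 4))]
    have hv : (volume : Measure ℝ) = gaussianReal 0 1 := rfl
    rw [hv, integral_exp_q, Fintype.card_fin]

lemma gauss_pi_tail (K : ℕ) :
    (Measure.pi fun _ : Fin K => gaussianReal 0 1) {x | (4:ℝ) * K ≤ ∑ i, x i ^ 2}
      ≤ ENNReal.ofReal (2 * Real.exp (-(1/2 : ℝ) * K)) := by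
  set ν := Measure.pi fun _ : Fin K => gaussianReal 0 1 with hν
  haveI : IsProbabilityMeasure ν := by rw [hν]; infer_instance
  set F : (Fin K → ℝ) → ℝ := fun x => ∏ i, Real.exp ((x i) ^ 2 / 4) with hF
  have hsub : {x : Fin K → ℝ | (4:ℝ) * K ≤ ∑ i, x i ^ 2}
      ⊆ {x | Real.exp K ≤ F x} := by
    intro x hx
    simp only [Set.mem_setOf_eq] at hx ⊢
    simp only [hF]
    rw [← Real.exp_sum]
    apply Real.exp_le_exp.2
    rw [← Finset.sum_div]
    linarith
  have hmar := mul_meas_ge_le_integral_of_nonneg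
    (μ := ν) (f := F)
    (Filter.Eventually.of_forall fun x => Finset.prod_nonneg fun i _ => (Real.exp_pos _).le)
    (gauss_pi_aux K).1 (Real.exp K)
  rw [(gauss_pi_aux K).2] at hmar
  have hfin : ν {x | Real.exp (K:ℝ) ≤ F x} ≠ ⊤ := measure_ne_top _ _
  have hbound : (ν {x | Real.exp (K:ℝ) ≤ F x}).toReal ≤ 2 * Real.exp (-(1/2 : ℝ) * K) := by
    have h2 : (ν {x | Real.exp (K:ℝ) ≤ F x}).toReal ≤ Real.sqrt 2 ^ K / Real.exp K := by
      rw [le_div_iff₀ (Real.exp_pos _)]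
      rw [show ν.real {x | Real.exp (K:ℝ) ≤ F x} = (ν {x | Real.exp (K:ℝ) ≤ F x}).toReal from rfl] at hmar
      linarith [hmar]
    refine h2.trans ?_
    have hs2 : Real.sqrt 2 ≤ Real.exp (1/2 : ℝ) := by
      rw [Real.exp_half]
      exact Real.sqrt_le_sqrt (by linarith [Real.add_one_le_exp (1:ℝ)])
    have : Real.sqrt 2 ^ K ≤ Real.exp ((1/2 : ℝ) * K) := by
      rw [mul_comm, Real.exp_nat_mul]
      exact pow_le_pow_left₀ (Real.sqrt_nonneg 2) hs2 K
    calc Real.sqrt 2 ^ K / Real.exp K ≤ Real.exp ((1/2:ℝ) * K) / Real.exp K := by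
          gcongr
      _ = Real.exp (-(1/2:ℝ) * K) := by
          rw [← Real.exp_sub]; ring_nf
      _ ≤ 2 * Real.exp (-(1/2:ℝ) * K) := by nlinarith [Real.exp_pos (-(1/2:ℝ) * K)]
  calc ν {x | (4:ℝ) * K ≤ ∑ i, x i ^ 2} ≤ ν {x | Real.exp (K:ℝ) ≤ F x} := measure_mono hsub
    _ = ENNReal.ofReal ((ν {x | Real.exp (K:ℝ) ≤ F x}).toReal) := (ENNReal.ofReal_toReal hfin).symm
    _ ≤ _ := ENNReal.ofReal_le_ofReal hbound

/-- Lemma 4.1: under path-length regularity, approximate local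
linearity, and Gaussianity of the leaky-ReLU-transformed latent distribution
(expressed via the whitening matrix `R = Σ^{−1/2}`, i.e. the positive-definite
matrix with `R Σ R = 1`), a sample `w ∼ μ` satisfies P1, P2, P3 with probability
at least `1 − (a²+b)/(Ka²) − 1/K − 2e^{−cK}`. -/
theorem sample_typical_properties :
    ∃ c : ℝ, 0 < c ∧
      ∀ (K n : ℕ), 2 ≤ K →
      ∀ (μ : Measure (Fin K → ℝ)), IsProbabilityMeasure μ →
      ∀ (G : (Fin K → ℝ) → (Fin n → ℝ)), ContDiff ℝ 1 G →
      ∀ (a b : ℝ), 0 < a →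
      Integrable (fun w => frobCLM (fderiv ℝ G w)) μ →
      (∫ w, frobCLM (fderiv ℝ G w) ∂μ) = a →
      Integrable (fun w => (frobCLM (fderiv ℝ G w) - a) ^ 2) μ →
      (∫ w, (frobCLM (fderiv ℝ G w) - a) ^ 2 ∂μ) ≤ b →
      ∀ (ε : ℝ), 0 < ε →
      ∀ (β : ℝ), 0 ≤ β →
      Integrable (fun w => ⨆ w' : {u : Fin K → ℝ // eNorm (u - w) ≤ ε},
        eNorm (G w'.1 - G w - fderiv ℝ G w (w'.1 - w)) ^ 2) μ →
      (∫ w, (⨆ w' : {u : Fin K → ℝ // eNorm (u - w) ≤ ε},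
        eNorm (G w'.1 - G w - fderiv ℝ G w (w'.1 - w)) ^ 2) ∂μ) ≤ β ^ 2 →
      ∀ (α : ℝ), 1 < α →
      ∀ (vbar : Fin K → ℝ) (Sig R : Matrix (Fin K) (Fin K) ℝ),
        Sig.PosDef → R.PosDef → R * Sig * R = 1 →
        Measure.map (fun w => R.mulVec (lrel α w - vbar)) μ
          = Measure.pi (fun _ : Fin K => gaussianReal 0 1) →
      ENNReal.ofReal (1 - (a ^ 2 + b) / (K * a ^ 2) - 1 / K - 2 * Real.exp (-c * K))
        ≤ μ {w | frobCLM (fderiv ℝ G w) ≤ Real.sqrt K * a ∧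
            (∀ w' : Fin K → ℝ, eNorm (w' - w) ≤ ε →
              eNorm (G w' - G w - fderiv ℝ G w (w' - w)) ≤ Real.sqrt K * β) ∧
            eNorm (R.mulVec (lrel α w - vbar)) ≤ 2 * Real.sqrt K} := by
  refine ⟨1/2, by norm_num, ?_⟩
  intro K n hK μ hμ G hG a b ha hint1 hEa hint2 hvar ε hε β hβ hint3 hsup α hα
    vbar Sig R hSig hR hRSR hmap
  have hK0 : (0:ℝ) < K := by positivity
  have hb0 : 0 ≤ b := le_trans (integral_nonneg fun w => sq_nonneg _) hvar
  set f1 : (Fin K → ℝ) → ℝ := fun w => frobCLM (fderiv ℝ G w) with hf1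
  set f2 : (Fin K → ℝ) → ℝ := fun w => ⨆ w' : {u : Fin K → ℝ // eNorm (u - w) ≤ ε},
      eNorm (G w'.1 - G w - fderiv ℝ G w (w'.1 - w)) ^ 2 with hf2
  set T : (Fin K → ℝ) → (Fin K → ℝ) := fun w => R.mulVec (lrel α w - vbar) with hT
  -- integrability and integral of f1 ^ 2
  have heq1 : (fun w => f1 w ^ 2) = fun w => (f1 w - a) ^ 2 + ((2*a) * f1 w - a^2) := by
    funext w; ring
  have hintsq : Integrable (fun w => f1 w ^ 2) μ := by
    rw [heq1]; exact hint2.add ((hint1.const_mul (2*a)).sub (integrable_const _))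
  have hEsq : ∫ w, f1 w ^ 2 ∂μ ≤ a ^ 2 + b := by
    have hkey : (∫ w, f1 w ^ 2 ∂μ) + ∫ _w, (a^2 : ℝ) ∂μ
        = (∫ w, (f1 w - a)^2 ∂μ) + ∫ w, (2*a) * f1 w ∂μ := by
      rw [← integral_add hintsq (integrable_const _),
        ← integral_add hint2 (hint1.const_mul (2*a))]
      congr 1; funext w; ring
    rw [integral_const] at hkey
    simp only [Measure.real, measure_univ, ENNReal.toReal_one, smul_eq_mul, one_mul] at hkey
    rw [integral_const_mul, hEa] at hkey
    nlinarith [hvar]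
  -- Event bounds
  have hE1 : μ {w | ¬ f1 w ≤ Real.sqrt K * a} ≤ ENNReal.ofReal ((a^2 + b) / (K * a^2)) := by
    have hm := mul_meas_ge_le_integral_of_nonneg (μ := μ)
      (ae_of_all μ fun w => sq_nonneg (f1 w)) hintsq (K * a^2)
    have hKa : (0:ℝ) < K * a^2 := by positivity
    have hsub : {w : Fin K → ℝ | ¬ f1 w ≤ Real.sqrt K * a} ⊆ {w | K * a^2 ≤ f1 w ^ 2} := by
      intro w hw
      simp only [Set.mem_setOf_eq, not_le] at hw ⊢
      have h0 : (0:ℝ) ≤ Real.sqrt K * a := by positivity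
      have := pow_le_pow_left₀ h0 hw.le 2
      calc (K:ℝ) * a^2 = (Real.sqrt K * a)^2 := by
            rw [mul_pow, Real.sq_sqrt hK0.le]
        _ ≤ f1 w ^ 2 := this
    refine (measure_mono hsub).trans ?_
    rw [← ENNReal.ofReal_toReal (measure_ne_top μ {w | K * a^2 ≤ f1 w ^ 2})]
    apply ENNReal.ofReal_le_ofReal
    rw [div_eq_inv_mul, ← mul_le_mul_iff_of_pos_left hKa, ← mul_assoc, mul_inv_cancel₀ hKa.ne',
      one_mul]
    exact hm.trans hEsq
  have hf2nonneg : ∀ w, 0 ≤ f2 w := fun w => Real.iSup_nonneg fun w' => sq_nonneg _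
  have hE2 : μ {w | ¬ ∀ w' : Fin K → ℝ, eNorm (w' - w) ≤ ε →
      eNorm (G w' - G w - fderiv ℝ G w (w' - w)) ≤ Real.sqrt K * β}
      ≤ ENNReal.ofReal (1 / K) := by
    have hsubval : ∀ w : (Fin K → ℝ), (¬ ∀ w' : Fin K → ℝ, eNorm (w' - w) ≤ ε →
        eNorm (G w' - G w - fderiv ℝ G w (w' - w)) ≤ Real.sqrt K * β) →
        K * β ^ 2 < f2 w := by
      intro w hw
      push_neg at hw
      obtain ⟨w', hw'1, hw'2⟩ := hw
      have h0 : (0:ℝ) ≤ Real.sqrt K * β := by positivity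
      have hval : (K:ℝ) * β^2 < eNorm (G w' - G w - fderiv ℝ G w (w' - w)) ^ 2 := by
        calc (K:ℝ) * β^2 = (Real.sqrt K * β)^2 := by rw [mul_pow, Real.sq_sqrt hK0.le]
          _ < _ := pow_lt_pow_left₀ hw'2 h0 two_ne_zero
      refine hval.trans_le ?_
      exact le_ciSup (bddAbove_local_lin G hG ε hε w) ⟨w', hw'1⟩
    rcases eq_or_lt_of_le hβ with hβ0 | hβpos
    · -- β = 0 : f2 = 0 a.e.
      have hint0 : ∫ w, f2 w ∂μ = 0 :=
        le_antisymm (by simpa [← hβ0] using hsup) (integral_nonneg hf2nonneg)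
      have hae : ∀ᵐ w ∂μ, f2 w = 0 :=
        (integral_eq_zero_iff_of_nonneg hf2nonneg hint3).mp hint0
      have h0 : μ {w | ¬ f2 w = 0} = 0 := by
        rw [← ae_iff]; exact hae
      refine le_trans (le_of_eq (measure_mono_null ?_ h0)) (by positivity)
      intro w hw
      have := hsubval w hw
      simp only [Set.mem_setOf_eq]
      rw [← hβ0] at this
      simp only [ne_eq]
      nlinarith [this]
    · have hm := mul_meas_ge_le_integral_of_nonneg (μ := μ)
        (ae_of_all μ fun w => hf2nonneg w) hint3 (K * β^2)
      have hKb : (0:ℝ) < K * β^2 := by positivity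
      have hsub : {w : Fin K → ℝ | ¬ ∀ w' : Fin K → ℝ, eNorm (w' - w) ≤ ε →
          eNorm (G w' - G w - fderiv ℝ G w (w' - w)) ≤ Real.sqrt K * β}
          ⊆ {w | K * β^2 ≤ f2 w} := fun w hw => (hsubval w hw).le
      refine (measure_mono hsub).trans ?_
      rw [← ENNReal.ofReal_toReal (measure_ne_top μ {w | K * β^2 ≤ f2 w})]
      apply ENNReal.ofReal_le_ofReal
      have h3 : (K:ℝ) * β^2 * (1/K) = β^2 := by field_simp
      have h2 : K * β^2 * (μ {w | K * β^2 ≤ f2 w}).toReal ≤ K * β^2 * (1 / K) := by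
        rw [h3]; exact hm.trans hsup
      exact le_of_mul_le_mul_left h2 hKb
  have hTm : Measurable T := by
    rw [hT]
    apply measurable_pi_lambda
    intro j
    simp only [Matrix.mulVec, dotProduct]
    apply Finset.measurable_sum
    intro k _
    apply Measurable.const_mul
    have hl : Measurable fun w : Fin K → ℝ => lrel α w k := by
      unfold lrel
      exact Measurable.ite (measurableSet_le measurable_const (measurable_pi_apply k))
        (measurable_pi_apply k) (by fun_prop)
    exact (hl.sub measurable_const : Measurable fun w : Fin K → ℝ => lrel α w k - vbar k)
  have hE3 : μ {w | ¬ eNorm (T w) ≤ 2 * Real.sqrt K}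
      ≤ ENNReal.ofReal (2 * Real.exp (-(1/2 : ℝ) * K)) := by
    have hS3 : MeasurableSet {x : Fin K → ℝ | (4:ℝ) * K ≤ ∑ i, x i ^ 2} :=
      measurableSet_le measurable_const
        (Finset.measurable_sum _ fun i _ => (measurable_pi_apply i).pow_const 2)
    have hsub : {w : Fin K → ℝ | ¬ eNorm (T w) ≤ 2 * Real.sqrt K}
        ⊆ T ⁻¹' {x : Fin K → ℝ | (4:ℝ) * K ≤ ∑ i, x i ^ 2} := by
      intro w hw
      simp only [Set.mem_setOf_eq, not_le] at hw
      simp only [Set.mem_preimage, Set.mem_setOf_eq]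
      have h0 : (0:ℝ) ≤ 2 * Real.sqrt K := by positivity
      have := pow_lt_pow_left₀ hw h0 two_ne_zero
      rw [eNorm_sq] at this
      calc (4:ℝ) * K = (2 * Real.sqrt K)^2 := by
            rw [mul_pow, Real.sq_sqrt hK0.le]; norm_num
        _ ≤ _ := this.le
    refine (measure_mono hsub).trans ?_
    rw [← Measure.map_apply hTm hS3] at *
    rw [hmap] at *
    exact gauss_pi_tail K
  -- combine
  set P : Set (Fin K → ℝ) := {w | f1 w ≤ Real.sqrt K * a ∧
      (∀ w' : Fin K → ℝ, eNorm (w' - w) ≤ ε →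
        eNorm (G w' - G w - fderiv ℝ G w (w' - w)) ≤ Real.sqrt K * β) ∧
      eNorm (T w) ≤ 2 * Real.sqrt K} with hP
  have hcompl : μ Pᶜ ≤ ENNReal.ofReal ((a^2 + b) / (K * a^2))
      + ENNReal.ofReal (1 / K) + ENNReal.ofReal (2 * Real.exp (-(1/2 : ℝ) * K)) := by
    have hsub : Pᶜ ⊆ ({w | ¬ f1 w ≤ Real.sqrt K * a} ∪
        {w | ¬ ∀ w' : Fin K → ℝ, eNorm (w' - w) ≤ ε →
          eNorm (G w' - G w - fderiv ℝ G w (w' - w)) ≤ Real.sqrt K * β}) ∪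
        {w | ¬ eNorm (T w) ≤ 2 * Real.sqrt K} := by
      intro w hw
      simp only [hP, Set.mem_compl_iff, Set.mem_setOf_eq, not_and_or] at hw
      simp only [Set.mem_union, Set.mem_setOf_eq]
      tauto
    refine (measure_mono hsub).trans ?_
    refine (measure_union_le _ _).trans ?_
    gcongr
    exact (measure_union_le _ _).trans (by gcongr)
  have hsum : μ Pᶜ ≤ ENNReal.ofReal ((a^2 + b) / (K * a^2) + 1 / K
      + 2 * Real.exp (-(1/2 : ℝ) * K)) := by
    refine hcompl.trans ?_
    rw [ENNReal.ofReal_add (by positivity) (by positivity),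
      ENNReal.ofReal_add (by positivity) (by positivity)]
  have hone : (1:ℝ≥0∞) ≤ μ P + μ Pᶜ := by
    calc (1:ℝ≥0∞) = μ Set.univ := (measure_univ).symm
      _ = μ (P ∪ Pᶜ) := by rw [Set.union_compl_self]
      _ ≤ μ P + μ Pᶜ := measure_union_le _ _
  calc ENNReal.ofReal (1 - (a ^ 2 + b) / (↑K * a ^ 2) - 1 / ↑K
        - 2 * Real.exp (-(1/2 : ℝ) * ↑K))
      = 1 - ENNReal.ofReal ((a^2 + b) / (K * a^2) + 1 / K
        + 2 * Real.exp (-(1/2 : ℝ) * K)) := by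
        rw [← ENNReal.ofReal_one, ← ENNReal.ofReal_sub _ (by positivity)]
        congr 1
        ring
    _ ≤ 1 - μ Pᶜ := tsub_le_tsub_left hsum 1
    _ ≤ μ P := by
        rw [tsub_le_iff_right]
        exact hone
end

section
/- Let K ≥ P ≥ 1 be integers, let a > 0, ε > 0, and let J₀ ∈ ℝ^{n×P} be a matrix with ‖J₀‖_F ≤ √K·a. Let E = { J₀ x : x ∈ ℝ^P, ‖x‖₂ ≤ ε } ⊆ ℝ^n. Then there exists a finite set N ⊆ ℝ^n such that every point of E is within Euclidean distance a·ε of some point of N, and |N| ≤ ( 12·√(K/P) )^P. -/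
/-- The Frobenius norm of a matrix. -/
noncomputable def frobNorm {n P : ℕ} (J : Matrix (Fin n) (Fin P) ℝ) : ℝ :=
  Real.sqrt (∑ i, ∑ j, J i j ^ 2)

open Finset Matrix MeasureTheory Metric ENNReal
open scoped ENNReal


open Finset in
lemma amgm_prod (P : ℕ) (hP0 : 0 < P) (b : Fin P → ℝ) (hb : ∀ i, 0 ≤ b i) :
    ∏ i, b i ≤ ((∑ i, b i) / P) ^ P := by
  have hPR : (0:ℝ) < P := by exact_mod_cast hP0
  have hw : ∀ i ∈ Finset.univ (α := Fin P), (0:ℝ) ≤ 1 / P := by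
    intro i _; positivity
  have hz : ∀ i ∈ Finset.univ (α := Fin P), (0:ℝ) ≤ b i := fun i _ => hb i
  have hw1 : ∑ _i : Fin P, (1:ℝ)/P = 1 := by
    simp [Finset.sum_const, Finset.card_univ]
    field_simp
  have key := Real.geom_mean_le_arith_mean_weighted Finset.univ (fun _ => 1/P) b hw hw1 hz
  -- key : ∏ i, b i ^ (1/P : ℝ) ≤ ∑ i, (1/P) * b i
  have lhs : (∏ i, b i ^ ((1:ℝ)/P)) ^ P = ∏ i, b i := by
    rw [← Finset.prod_pow]
    refine Finset.prod_congr rfl fun i _ => ?_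
    rw [← Real.rpow_natCast (b i ^ ((1:ℝ)/P)) P, ← Real.rpow_mul (hb i)]
    rw [one_div, inv_mul_cancel₀ (ne_of_gt hPR), Real.rpow_one]
  have rhs : ∑ i, (1:ℝ)/P * b i = (∑ i, b i) / P := by
    rw [Finset.sum_div]
    exact Finset.sum_congr rfl fun i _ => by ring
  calc ∏ i, b i = (∏ i, b i ^ ((1:ℝ)/P)) ^ P := lhs.symm
    _ ≤ ((∑ i, (1:ℝ)/P * b i)) ^ P := by
        apply pow_le_pow_left₀ (Finset.prod_nonneg fun i _ => Real.rpow_nonneg (hb i) _) key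
    _ = ((∑ i, b i) / P) ^ P := by rw [rhs]


lemma cover_lemma (P : ℕ) (hP0 : 0 < P) (τ : Fin P → ℝ) (hτ : ∀ i, 0 < τ i)
    (ε δ : ℝ) (hε : 0 < ε) (hδ : 0 < δ) (hδτ : ∀ i, δ ≤ 4 * τ i * ε) :
    ∃ C : Finset (EuclideanSpace ℝ (Fin P)),
      (∀ w : EuclideanSpace ℝ (Fin P), ‖w‖ ≤ ε →
        ∃ c ∈ C, ‖Matrix.toEuclideanLin (Matrix.diagonal τ) w - c‖ ≤ δ) ∧
      (C.card : ℝ) ≤ ∏ i, (6 * τ i * ε / δ) := by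
  haveI : Nonempty (Fin P) := ⟨⟨0, hP0⟩⟩
  set f := Matrix.toEuclideanLin (Matrix.diagonal τ) with hf
  set E := f '' closedBall (0 : EuclideanSpace ℝ (Fin P)) ε with hE
  -- maximal separated subset
  obtain ⟨M, hM⟩ : ∃ m, Maximal
      (· ∈ {s : Set (EuclideanSpace ℝ (Fin P)) | s ⊆ E ∧
        s.Pairwise fun x y => δ ≤ dist x y}) m := by
    apply zorn_subset
    intro c hc hchain
    refine ⟨⋃₀ c, ⟨?_, ?_⟩, fun s hs => Set.subset_sUnion_of_mem hs⟩
    · intro x hx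
      obtain ⟨s, hs, hxs⟩ := hx
      exact (hc hs).1 hxs
    · intro x hx y hy hxy
      obtain ⟨s, hs, hxs⟩ := hx
      obtain ⟨t, ht, hyt⟩ := hy
      rcases hchain.total hs ht with hst | hts
      · exact (hc ht).2 (hst hxs) hyt hxy
      · exact (hc hs).2 hxs (hts hyt) hxy
  have hME : M ⊆ E := hM.1.1
  have hMsep : M.Pairwise fun x y => δ ≤ dist x y := hM.1.2
  -- coverage
  have hcov : ∀ z ∈ E, ∃ x ∈ M, dist z x ≤ δ := by
    intro z hz
    by_contra hcon
    push_neg at hcon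
    have hmem : M ∪ {z} ∈ {s : Set (EuclideanSpace ℝ (Fin P)) | s ⊆ E ∧
        s.Pairwise fun x y => δ ≤ dist x y} := by
      constructor
      · intro x hx
        rcases hx with hx | hx
        · exact hME hx
        · rw [hx]; exact hz
      · intro x hx y hy hxy
        rcases hx with hx | hx <;> rcases hy with hy | hy
        · exact hMsep hx hy hxy
        · rw [hy]; rw [dist_comm]; exact le_of_lt (hcon x hx)
        · rw [hx]; exact le_of_lt (hcon y hy)
        · rw [hx, hy] at hxy; exact absurd rfl hxy
    have := hM.2 hmem Set.subset_union_left
    have hzM : z ∈ M := this (Set.mem_union_right _ rfl)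
    have := hcon z hzM
    simp at this
    linarith
  -- volume of small balls
  set B := volume (ball (0 : EuclideanSpace ℝ (Fin P)) 1) with hB
  have hB0 : B ≠ 0 := (measure_ball_pos _ _ one_pos).ne'
  have hBtop : B ≠ ⊤ := measure_ball_lt_top.ne
  have hfinrank : Module.finrank ℝ (EuclideanSpace ℝ (Fin P)) = P := finrank_euclideanSpace_fin
  -- inclusion of small balls in a big ellipsoid
  have hincl : ∀ x ∈ M, ball x (δ/2) ⊆ f '' closedBall 0 (3*ε) := by
    intro x hx z hz
    obtain ⟨w, hw, rfl⟩ := hME hx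
    simp only [mem_closedBall, dist_zero_right] at hw
    rw [mem_ball] at hz
    set q : EuclideanSpace ℝ (Fin P) :=
      (WithLp.equiv 2 (Fin P → ℝ)).symm (fun i => (z i - f w i) / τ i) with hq
    have happ : ∀ (u : EuclideanSpace ℝ (Fin P)) (i : Fin P), f u i = τ i * u i := by
      intro u i
      simp [hf, Matrix.toEuclideanLin_apply, Matrix.mulVec_diagonal]
    have hzeq : z = f (w + q) := by
      apply PiLp.ext
      intro i
      rw [happ]
      have : (w + q) i = w i + (z i - f w i) / τ i := rfl
      rw [this, mul_add, mul_div_cancel₀ _ (hτ i).ne', ← happ]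
      ring
    have hqn : ‖q‖ ≤ 2 * ε := by
      have h1 : ∀ i, ((z i - f w i) / τ i)^2 ≤ (4*ε/δ)^2 * (z i - f w i)^2 := by
        intro i
        have hinv : (1:ℝ)/τ i ≤ 4*ε/δ := by
          rw [div_le_div_iff₀ (hτ i) hδ]
          linarith [hδτ i]
        have h2 : ((z i - f w i) / τ i)^2 = (z i - f w i)^2 * ((1:ℝ)/τ i)^2 := by
          field_simp
        rw [h2]
        have h3 : ((1:ℝ)/τ i)^2 ≤ (4*ε/δ)^2 :=
          pow_le_pow_left₀ (div_nonneg zero_le_one (hτ i).le) hinv 2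
        calc (z i - f w i)^2 * ((1:ℝ)/τ i)^2 ≤ (z i - f w i)^2 * (4*ε/δ)^2 :=
              mul_le_mul_of_nonneg_left h3 (sq_nonneg _)
          _ = (4*ε/δ)^2 * (z i - f w i)^2 := by ring
      have hzfw : ∑ i, (z i - f w i)^2 ≤ (δ/2)^2 := by
        have hnorm : ‖z - f w‖ ≤ δ/2 := by
          rw [← dist_eq_norm]; exact le_of_lt hz
        have hne : ‖z - f w‖^2 = ∑ i, (z i - f w i)^2 := by
          rw [EuclideanSpace.norm_eq, Real.sq_sqrt (by positivity)]
          exact Finset.sum_congr rfl fun i _ => by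
            rw [Real.norm_eq_abs, sq_abs]
            rfl
        rw [← hne]
        exact pow_le_pow_left₀ (norm_nonneg _) hnorm 2
      have hqe : ‖q‖^2 = ∑ i, ((z i - f w i) / τ i)^2 := by
        rw [EuclideanSpace.norm_eq, Real.sq_sqrt (by positivity)]
        exact Finset.sum_congr rfl fun i _ => by
          rw [Real.norm_eq_abs, sq_abs]
          rfl
      have hsum : ‖q‖^2 ≤ (2*ε)^2 := by
        rw [hqe]
        calc ∑ i, ((z i - f w i) / τ i)^2 ≤ ∑ i, (4*ε/δ)^2 * (z i - f w i)^2 :=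
              Finset.sum_le_sum fun i _ => h1 i
          _ = (4*ε/δ)^2 * ∑ i, (z i - f w i)^2 := by rw [Finset.mul_sum]
          _ ≤ (4*ε/δ)^2 * (δ/2)^2 := by
              apply mul_le_mul_of_nonneg_left hzfw (by positivity)
          _ = (2*ε)^2 := by field_simp; ring
      have h4 := Real.sqrt_le_sqrt hsum
      rwa [Real.sqrt_sq (norm_nonneg q), Real.sqrt_sq (by positivity)] at h4
    refine ⟨w + q, ?_, hzeq.symm⟩
    rw [mem_closedBall, dist_zero_right]
    calc ‖w + q‖ ≤ ‖w‖ + ‖q‖ := norm_add_le _ _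
      _ ≤ ε + 2*ε := add_le_add hw hqn
      _ = 3*ε := by ring
  -- determinant
  have hτprodpos : (0:ℝ) < ∏ i, τ i := Finset.prod_pos fun i _ => hτ i
  have hdet : |LinearMap.det f| = ∏ i, τ i := by
    have hd : LinearMap.det f = (Matrix.diagonal τ).det := by
      rw [hf, Matrix.toEuclideanLin_eq_toLin]
      exact LinearMap.det_toLin _ _
    rw [hd, Matrix.det_diagonal, abs_of_pos hτprodpos]
  have hvol_big : volume (f '' closedBall 0 (3*ε)) =
      ENNReal.ofReal (∏ i, τ i) * (ENNReal.ofReal ((3*ε)^P) * B) := by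
    rw [MeasureTheory.Measure.addHaar_image_linearMap, hdet,
        MeasureTheory.Measure.addHaar_closedBall _ _ (by positivity : (0:ℝ) ≤ 3*ε), hfinrank]
  have hprodpos : (0:ℝ) < ∏ i, (6 * τ i * ε / δ) :=
    Finset.prod_pos fun i _ => by have := hτ i; positivity
  have hprodeq : ∏ i, (6 * τ i * ε / δ) = (∏ i, τ i) * ((3*ε)^P) / ((δ/2)^P) := by
    have h1 : ∀ i, (6 * τ i * ε / δ) = τ i * ((3*ε)/(δ/2)) := by
      intro i; field_simp; ring
    rw [Finset.prod_congr rfl (fun i _ => h1 i), Finset.prod_mul_distrib,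
        Finset.prod_const, Finset.card_univ, Fintype.card_fin, div_pow]
    ring
  have hkey : ∀ F : Finset (EuclideanSpace ℝ (Fin P)), ↑F ⊆ M →
      (F.card : ℝ) ≤ ∏ i, (6 * τ i * ε / δ) := by
    intro F hF
    have hdisj : (↑F : Set (EuclideanSpace ℝ (Fin P))).PairwiseDisjoint
        (fun x => ball x (δ/2)) := by
      intro x hx y hy hxy
      exact ball_disjoint_ball (by
        have := hMsep (hF hx) (hF hy) hxy
        linarith)
    have hmeas := measure_biUnion_finset (μ := volume) hdisj
      (fun b _ => measurableSet_ball)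
    have hsub : (⋃ x ∈ F, ball x (δ/2)) ⊆ f '' closedBall 0 (3*ε) := by
      intro z hz
      simp only [Set.mem_iUnion, exists_prop] at hz
      obtain ⟨x, hxF, hzx⟩ := hz
      exact hincl x (hF hxF) hzx
    have hle := measure_mono (μ := (volume : Measure (EuclideanSpace ℝ (Fin P)))) hsub
    rw [hmeas] at hle
    have hball : ∀ x ∈ F,
        volume (ball x (δ/2)) = ENNReal.ofReal ((δ/2)^P) * B := by
      intro x _
      rw [MeasureTheory.Measure.addHaar_ball volume x (by positivity : (0:ℝ) ≤ δ/2), hfinrank]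
    rw [Finset.sum_congr rfl hball, Finset.sum_const, hvol_big, nsmul_eq_mul] at hle
    have hle2 : (F.card : ℝ≥0∞) * ENNReal.ofReal ((δ/2)^P) ≤
        ENNReal.ofReal (∏ i, τ i) * ENNReal.ofReal ((3*ε)^P) := by
      rw [← ENNReal.mul_le_mul_iff_left hB0 hBtop]
      calc (F.card : ℝ≥0∞) * ENNReal.ofReal ((δ/2)^P) * B
          = (F.card : ℝ≥0∞) * (ENNReal.ofReal ((δ/2)^P) * B) := by rw [mul_assoc]
        _ ≤ ENNReal.ofReal (∏ i, τ i) * (ENNReal.ofReal ((3*ε)^P) * B) := hle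
        _ = ENNReal.ofReal (∏ i, τ i) * ENNReal.ofReal ((3*ε)^P) * B := by rw [mul_assoc]
    have hle3 : (F.card : ℝ) * ((δ/2)^P) ≤ (∏ i, τ i) * ((3*ε)^P) := by
      have hfin : ENNReal.ofReal (∏ i, τ i) * ENNReal.ofReal ((3*ε)^P) ≠ ⊤ :=
        ENNReal.mul_ne_top ENNReal.ofReal_ne_top ENNReal.ofReal_ne_top
      have := ENNReal.toReal_mono hfin hle2
      rw [ENNReal.toReal_mul, ENNReal.toReal_mul, ENNReal.toReal_natCast,
          ENNReal.toReal_ofReal (by positivity : (0:ℝ) ≤ (δ/2)^P),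
          ENNReal.toReal_ofReal hτprodpos.le,
          ENNReal.toReal_ofReal (by positivity : (0:ℝ) ≤ (3*ε)^P)] at this
      exact this
    rw [hprodeq, le_div_iff₀ (by positivity : (0:ℝ) < (δ/2)^P)]
    exact hle3
  -- M is finite
  have hMfin : M.Finite := by
    by_contra hinf
    obtain ⟨t, htM, htfin, htcard⟩ :=
      Set.Infinite.exists_subset_ncard_eq hinf (⌊∏ i, (6 * τ i * ε / δ)⌋₊ + 1)
    have hFc : (htfin.toFinset.card : ℝ) ≤ ∏ i, (6 * τ i * ε / δ) := by
      apply hkey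
      rw [Set.Finite.coe_toFinset]
      exact htM
    rw [Set.ncard_eq_toFinset_card t htfin] at htcard
    rw [htcard] at hFc
    have hlt := Nat.lt_floor_add_one (∏ i, (6 * τ i * ε / δ))
    push_cast at hFc
    linarith
  refine ⟨hMfin.toFinset, ?_, ?_⟩
  · intro w hw
    have hfwE : f w ∈ E := ⟨w, by simpa using hw, rfl⟩
    obtain ⟨x, hxM, hdx⟩ := hcov (f w) hfwE
    exact ⟨x, hMfin.mem_toFinset.mpr hxM, by rwa [← dist_eq_norm]⟩
  · apply hkey
    rw [Set.Finite.coe_toFinset]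

lemma sum_eig_le {n P : ℕ} (J₀ : Matrix (Fin n) (Fin P) ℝ) (K : ℕ) (a : ℝ)
    (hJ : frobNorm J₀ ≤ Real.sqrt K * a) :
    ∑ i, (Matrix.isHermitian_conjTranspose_mul_self J₀).eigenvalues i ≤ K * a^2 := by
  set Amat := J₀ᴴ * J₀ with hAmat
  set hA := Matrix.isHermitian_conjTranspose_mul_self J₀
  have htrace : ∑ i, hA.eigenvalues i = Amat.trace := by
    have hst := hA.spectral_theorem
    have h1 : Amat.trace = ((hA.eigenvectorUnitary : Matrix (Fin P) (Fin P) ℝ) *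
        Matrix.diagonal (RCLike.ofReal ∘ hA.eigenvalues) *
        (star (hA.eigenvectorUnitary : Matrix (Fin P) (Fin P) ℝ))).trace := by
      rw [hAmat]
      conv_lhs => rw [hst, Unitary.conjStarAlgAut_apply]
    rw [h1, Matrix.trace_mul_cycle,
      Unitary.star_mul_self_of_mem hA.eigenvectorUnitary.prop,
      Matrix.one_mul, Matrix.trace_diagonal]
    simp
  have hfrob : ∑ i, ∑ j, J₀ i j ^ 2 ≤ (K:ℝ) * a^2 := by
    have h0 : (0:ℝ) ≤ ∑ i, ∑ j, J₀ i j ^ 2 := by positivity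
    have h1 : frobNorm J₀ ^ 2 ≤ (Real.sqrt K * a)^2 := by
      apply pow_le_pow_left₀ (Real.sqrt_nonneg _) hJ
    rw [frobNorm, Real.sq_sqrt h0] at h1
    calc ∑ i, ∑ j, J₀ i j ^ 2 ≤ (Real.sqrt K * a)^2 := h1
      _ = (K:ℝ) * a^2 := by
        rw [mul_pow, Real.sq_sqrt (Nat.cast_nonneg K)]
  have htr2 : Amat.trace = ∑ i, ∑ j, J₀ i j ^ 2 := by
    rw [Matrix.trace]
    simp only [Matrix.diag_apply, hAmat, Matrix.mul_apply, Matrix.conjTranspose_apply,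
      star_trivial]
    rw [Finset.sum_comm]
    exact Finset.sum_congr rfl fun i _ => Finset.sum_congr rfl fun j _ => (sq (J₀ i j)).symm
  rw [htrace, htr2]
  exact hfrob

lemma gram_eq {n P : ℕ} (J₀ : Matrix (Fin n) (Fin P) ℝ) (i j : Fin P) :
    ∑ k, (J₀ *ᵥ ⇑((Matrix.isHermitian_conjTranspose_mul_self J₀).eigenvectorBasis i)) k *
      (J₀ *ᵥ ⇑((Matrix.isHermitian_conjTranspose_mul_self J₀).eigenvectorBasis j)) k =
    if i = j then (Matrix.isHermitian_conjTranspose_mul_self J₀).eigenvalues j else 0 := by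
  set hA := Matrix.isHermitian_conjTranspose_mul_self J₀
  set v := hA.eigenvectorBasis with hv
  show (J₀ *ᵥ ⇑(v i)) ⬝ᵥ (J₀ *ᵥ ⇑(v j)) = if i = j then hA.eigenvalues j else 0
  have h1 : ∀ (x z : Fin P → ℝ), (J₀ *ᵥ x) ⬝ᵥ (J₀ *ᵥ z) = x ⬝ᵥ ((J₀ᴴ * J₀) *ᵥ z) := by
    intro x z
    rw [← Matrix.mulVec_mulVec, Matrix.dotProduct_mulVec x J₀ᴴ,
      Matrix.conjTranspose_eq_transpose_of_trivial, Matrix.vecMul_transpose]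
  rw [h1, hA.mulVec_eigenvectorBasis j, dotProduct_smul]
  have horth := orthonormal_iff_ite.mp v.orthonormal i j
  have hdot : ⇑(v i) ⬝ᵥ ⇑(v j) = if i = j then 1 else 0 := by
    rw [← horth]
    simp [PiLp.inner_apply, RCLike.inner_apply, dotProduct, mul_comm]
  rw [smul_eq_mul, hdot]
  by_cases h : i = j <;> simp [h]

set_option maxHeartbeats 1000000 in
/-- the image of the ε-ball of ℝ^P under a matrix `J₀` with Frobenius
norm at most `√K·a` admits an `(a·ε)`-net of cardinality at most `(12√(K/P))^P`. -/
theorem ellipsoid_covering (K P n : ℕ) (hP : 1 ≤ P) (hPK : P ≤ K)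
    (a ε : ℝ) (ha : 0 < a) (hε : 0 < ε)
    (J₀ : Matrix (Fin n) (Fin P) ℝ)
    (hJ : frobNorm J₀ ≤ Real.sqrt K * a) :
    ∃ N : Finset (Fin n → ℝ),
      (∀ x : Fin P → ℝ, eNorm x ≤ ε →
        ∃ z ∈ N, eNorm (J₀.mulVec x - z) ≤ a * ε) ∧
      (N.card : ℝ) ≤ (12 * Real.sqrt ((K : ℝ) / P)) ^ P := by
  have hP0 : 0 < P := hP
  set hA := Matrix.isHermitian_conjTranspose_mul_self J₀ with hhA
  set μ : Fin P → ℝ := hA.eigenvalues with hμdef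
  set v := hA.eigenvectorBasis with hvdef
  have hμ0 : ∀ i, 0 ≤ μ i := fun i => Matrix.eigenvalues_conjTranspose_mul_self_nonneg J₀ i
  have hsumμ : ∑ i, μ i ≤ K * a^2 := sum_eig_le J₀ K a hJ
  set X : Fin P → Fin n → ℝ := fun i => J₀ *ᵥ ⇑(v i) with hXdef
  have hgram : ∀ i j, ∑ k, X i k * X j k = if i = j then μ j else 0 :=
    fun i j => gram_eq J₀ i j
  set σ : Fin P → ℝ := fun i => Real.sqrt (μ i) with hσdef
  have hσ0 : ∀ i, 0 ≤ σ i := fun i => Real.sqrt_nonneg _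
  have hσsq : ∀ i, σ i ^ 2 = μ i := fun i => Real.sq_sqrt (hμ0 i)
  set τ : Fin P → ℝ := fun i => max (σ i) (a/4) with hτdef
  have hτpos : ∀ i, 0 < τ i := fun i => lt_of_lt_of_le (by positivity) (le_max_right _ _)
  have hστ : ∀ i, σ i ≤ τ i := fun i => le_max_left _ _
  have hτa : ∀ i, a/4 ≤ τ i := fun i => le_max_right _ _
  obtain ⟨C, hCcov, hCcard⟩ := cover_lemma P hP0 τ hτpos ε (a*ε) hε (by positivity)
    (fun i => by have := hτa i; nlinarith)
  -- the net
  set g : EuclideanSpace ℝ (Fin P) → (Fin n → ℝ) :=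
    fun c => fun k => ∑ i, c i * ((σ i)⁻¹ * X i k) with hgdef
  refine ⟨C.image g, ?_, ?_⟩
  · -- coverage
    intro x hx
    set x' : EuclideanSpace ℝ (Fin P) := (WithLp.equiv 2 (Fin P → ℝ)).symm x with hx'def
    have hx'norm : ‖x'‖ ≤ ε := by
      rw [EuclideanSpace.norm_eq]
      rw [eNorm] at hx
      have h9 : ∀ k, ‖x' k‖^2 = x k ^2 := fun k => by rw [Real.norm_eq_abs, sq_abs]; rfl
      rw [Finset.sum_congr rfl fun k _ => h9 k]
      exact hx
    set y : Fin P → ℝ := fun i => v.repr x' i with hydef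
    have hsumy : ∑ i, (y i)^2 = ‖x'‖^2 := by
      rw [← v.repr.norm_map x', EuclideanSpace.norm_eq, Real.sq_sqrt (by positivity)]
      exact Finset.sum_congr rfl fun i _ => by rw [Real.norm_eq_abs, sq_abs]
    have hxfun : ∀ jj, x jj = ∑ i, y i * ⇑(v i) jj := by
      intro jj
      have hsr := v.sum_repr x'
      have h2 : (WithLp.linearEquiv 2 ℝ (Fin P → ℝ)) (∑ i, y i • v i) =
          (WithLp.linearEquiv 2 ℝ (Fin P → ℝ)) x' := congrArg _ hsr
      rw [map_sum] at h2
      have h4 : (WithLp.linearEquiv 2 ℝ (Fin P → ℝ)) x' = x := rfl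
      have h5 : ∀ i, (WithLp.linearEquiv 2 ℝ (Fin P → ℝ)) (y i • v i) = y i • ⇑(v i) := by
        intro i
        rw [_root_.map_smul]
        rfl
      rw [h4, Finset.sum_congr rfl fun i _ => h5 i] at h2
      have h3 := congrFun h2.symm jj
      simpa [Finset.sum_apply] using h3
    have hJx : ∀ k, (J₀ *ᵥ x) k = ∑ i, y i * X i k := by
      intro k
      simp only [Matrix.mulVec, dotProduct]
      calc ∑ j, J₀ k j * x j = ∑ j, ∑ i, J₀ k j * (y i * ⇑(v i) j) := by
            refine Finset.sum_congr rfl fun j _ => ?_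
            rw [hxfun j, Finset.mul_sum]
        _ = ∑ i, ∑ j, J₀ k j * (y i * ⇑(v i) j) := Finset.sum_comm
        _ = ∑ i, y i * ∑ j, J₀ k j * ⇑(v i) j := by
            refine Finset.sum_congr rfl fun i _ => ?_
            rw [Finset.mul_sum]
            exact Finset.sum_congr rfl fun j _ => by ring
        _ = ∑ i, y i * X i k := rfl
    set w : EuclideanSpace ℝ (Fin P) :=
      (WithLp.equiv 2 (Fin P → ℝ)).symm (fun i => σ i * y i / τ i) with hwdef
    have hwnorm : ‖w‖ ≤ ε := by
      rw [EuclideanSpace.norm_eq]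
      have h1 : ∀ i, ‖w i‖^2 ≤ (y i)^2 := by
        intro i
        have hwi : w i = σ i * y i / τ i := rfl
        rw [Real.norm_eq_abs, sq_abs, hwi]
        have h2 : (σ i * y i / τ i)^2 = (y i)^2 * (σ i / τ i)^2 := by
          field_simp
        rw [h2]
        have h3 : (σ i / τ i)^2 ≤ 1 := by
          apply pow_le_one₀ (div_nonneg (hσ0 i) (hτpos i).le)
          exact div_le_one_of_le₀ (hστ i) (hτpos i).le
        nlinarith [sq_nonneg (y i)]
      calc Real.sqrt (∑ i, ‖w i‖^2) ≤ Real.sqrt (∑ i, (y i)^2) :=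
            Real.sqrt_le_sqrt (Finset.sum_le_sum fun i _ => h1 i)
        _ = ‖x'‖ := by rw [hsumy, Real.sqrt_sq (norm_nonneg _)]
        _ ≤ ε := hx'norm
    obtain ⟨c, hcC, hc⟩ := hCcov w hwnorm
    set d : Fin P → ℝ := fun i => σ i * y i - c i with hddef
    have hfw : ∀ i, (Matrix.toEuclideanLin (Matrix.diagonal τ) w) i = σ i * y i := by
      intro i
      have : (Matrix.toEuclideanLin (Matrix.diagonal τ) w) i = τ i * w i := by
        simp [Matrix.toEuclideanLin_apply, Matrix.mulVec_diagonal]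
      rw [this]
      have hwi : w i = σ i * y i / τ i := rfl
      rw [hwi]
      field_simp [(hτpos i).ne']
    have hdsum : ∑ i, (d i)^2 ≤ (a*ε)^2 := by
      have h1 : ‖Matrix.toEuclideanLin (Matrix.diagonal τ) w - c‖^2 ≤ (a*ε)^2 :=
        pow_le_pow_left₀ (norm_nonneg _) hc 2
      rw [EuclideanSpace.norm_eq, Real.sq_sqrt (by positivity)] at h1
      calc ∑ i, (d i)^2
          = ∑ i, ‖(Matrix.toEuclideanLin (Matrix.diagonal τ) w - c) i‖^2 := by
            refine Finset.sum_congr rfl fun i _ => ?_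
            have hsub : (Matrix.toEuclideanLin (Matrix.diagonal τ) w - c) i =
                (Matrix.toEuclideanLin (Matrix.diagonal τ) w) i - c i := rfl
            rw [Real.norm_eq_abs, sq_abs, hsub, hfw i]
        _ ≤ (a*ε)^2 := h1
    -- vanishing of J₀ *ᵥ v i when σ i = 0
    have hvanish : ∀ i, σ i = 0 → ∀ k, X i k = 0 := by
      intro i hσi k
      have hμi : μ i = 0 := by rw [← hσsq i, hσi]; ring
      have h1 := hgram i i
      rw [if_pos rfl, hμi] at h1
      have h2 : ∀ k' ∈ Finset.univ, (0:ℝ) ≤ X i k' * X i k' :=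
        fun k' _ => mul_self_nonneg _
      have h3 := (Finset.sum_eq_zero_iff_of_nonneg h2).mp h1 k (Finset.mem_univ k)
      nlinarith [h3]
    -- the difference
    have hdiff : ∀ k, (J₀ *ᵥ x) k - g c k = ∑ i, (d i * (σ i)⁻¹) * X i k := by
      intro k
      rw [hJx k]
      have : g c k = ∑ i, c i * ((σ i)⁻¹ * X i k) := rfl
      rw [this, ← Finset.sum_sub_distrib]
      refine Finset.sum_congr rfl fun i _ => ?_
      by_cases hσi : σ i = 0
      · rw [hvanish i hσi k]; ring
      · have hdi : d i = σ i * y i - c i := rfl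
        have : d i * (σ i)⁻¹ = y i - c i * (σ i)⁻¹ := by
          rw [hdi]
          field_simp
        rw [this]
        ring
    have hsq : ∑ k, ((J₀ *ᵥ x) k - g c k)^2 = ∑ i, (d i * (σ i)⁻¹)^2 * μ i := by
      have hexp : ∀ k, ((J₀ *ᵥ x) k - g c k)^2 =
          ∑ i, ∑ j, (d i * (σ i)⁻¹) * (d j * (σ j)⁻¹) *
            (X i k * X j k) := by
        intro k
        rw [hdiff k, sq, Finset.sum_mul_sum]
        exact Finset.sum_congr rfl fun i _ => Finset.sum_congr rfl fun j _ => by ring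
      rw [Finset.sum_congr rfl fun k _ => hexp k]
      rw [Finset.sum_comm]
      calc ∑ i, ∑ k, ∑ j, (d i * (σ i)⁻¹) * (d j * (σ j)⁻¹) *
            (X i k * X j k)
          = ∑ i, ∑ j, (d i * (σ i)⁻¹) * (d j * (σ j)⁻¹) *
              (∑ k, X i k * X j k) := by
            refine Finset.sum_congr rfl fun i _ => ?_
            rw [Finset.sum_comm]
            exact Finset.sum_congr rfl fun j _ => (Finset.mul_sum _ _ _).symm
        _ = ∑ i, (d i * (σ i)⁻¹)^2 * μ i := by
            refine Finset.sum_congr rfl fun i _ => ?_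
            rw [Finset.sum_congr rfl fun j (_ : j ∈ Finset.univ) => by rw [hgram i j]]
            simp only [mul_ite, mul_zero, Finset.sum_ite_eq, Finset.mem_univ, if_true]
            ring
    have hbound : ∑ i, (d i * (σ i)⁻¹)^2 * μ i ≤ ∑ i, (d i)^2 := by
      refine Finset.sum_le_sum fun i _ => ?_
      by_cases hσi : σ i = 0
      · have hμi : μ i = 0 := by rw [← hσsq i, hσi]; ring
        rw [hμi]
        nlinarith [sq_nonneg (d i)]
      · have hμi : μ i = σ i ^2 := (hσsq i).symm
        rw [hμi]
        have : (d i * (σ i)⁻¹)^2 * σ i ^2 = (d i)^2 := by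
          field_simp
        rw [this]
    refine ⟨g c, Finset.mem_image_of_mem g hcC, ?_⟩
    rw [eNorm]
    have h5 : ∑ k, ((J₀ *ᵥ x) k - g c k)^2 ≤ (a*ε)^2 := by
      rw [hsq]; exact le_trans hbound hdsum
    calc Real.sqrt (∑ k, (J₀.mulVec x - g c) k ^2) ≤ Real.sqrt ((a*ε)^2) :=
          Real.sqrt_le_sqrt h5
      _ = a * ε := Real.sqrt_sq (by positivity)
  · -- cardinality
    have h1 : ((C.image g).card : ℝ) ≤ (C.card : ℝ) := by
      exact_mod_cast Finset.card_image_le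
    have h2 : ∏ i, (6 * τ i * ε / (a*ε)) = ∏ i, (6 * τ i / a) := by
      refine Finset.prod_congr rfl fun i _ => ?_
      rw [mul_comm a ε, ← div_div, mul_div_assoc, div_self hε.ne', mul_one]
    have hτsq : ∀ i, τ i ^2 ≤ μ i + a^2/16 := by
      intro i
      rcases le_total (σ i) (a/4) with h | h
      · have : τ i = a/4 := max_eq_right h
        rw [this]
        nlinarith [hμ0 i]
      · have : τ i = σ i := max_eq_left h
        rw [this, hσsq i]
        nlinarith [sq_nonneg a]
    have hKP : (0:ℝ) ≤ (K:ℝ)/P := by positivity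
    have hX0 : (0:ℝ) ≤ ∏ i, (6 * τ i / a) :=
      Finset.prod_nonneg fun i _ => by have := hτpos i; positivity
    have hXsq : (∏ i, (6 * τ i / a))^2 ≤ (144 * ((K:ℝ)/P))^P := by
      rw [← Finset.prod_pow]
      have hb : ∀ i, (0:ℝ) ≤ (6 * τ i / a)^2 := fun i => sq_nonneg _
      calc ∏ i, (6 * τ i / a)^2 ≤ ((∑ i, (6 * τ i / a)^2) / (P:ℝ)) ^ P :=
            amgm_prod P hP0 _ hb
        _ ≤ (144 * ((K:ℝ)/P))^P := by
            apply pow_le_pow_left₀ (by positivity)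
            rw [div_le_iff₀ (by exact_mod_cast hP0 : (0:ℝ) < P)]
            have hsum2 : ∑ i, (6 * τ i / a)^2 = 36 * (∑ i, τ i ^2) / a^2 := by
              rw [Finset.mul_sum, Finset.sum_div]
              exact Finset.sum_congr rfl fun i _ => by field_simp; ring
            have hτsum : ∑ i, τ i ^2 ≤ (K:ℝ)*a^2 + (P:ℝ)*(a^2/16) := by
              calc ∑ i, τ i ^2 ≤ ∑ i, (μ i + a^2/16) :=
                    Finset.sum_le_sum fun i _ => hτsq i
                _ = (∑ i, μ i) + (P:ℝ)*(a^2/16) := by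
                    rw [Finset.sum_add_distrib, Finset.sum_const, Finset.card_univ,
                      Fintype.card_fin, nsmul_eq_mul]
                _ ≤ (K:ℝ)*a^2 + (P:ℝ)*(a^2/16) := by linarith [hsumμ]
            have hPK' : (P:ℝ) ≤ (K:ℝ) := by exact_mod_cast hPK
            have h144 : 144 * ((K:ℝ)/P) * P = 144*(K:ℝ) := by
              field_simp
            rw [hsum2, h144, div_le_iff₀ (by positivity : (0:ℝ) < a^2)]
            nlinarith [mul_le_mul_of_nonneg_right hPK' (sq_nonneg a)]
    have hY : ((12 * Real.sqrt ((K : ℝ) / P)) ^ P)^2 = (144 * ((K:ℝ)/P))^P := by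
      rw [← pow_mul, mul_comm P 2, pow_mul]
      congr 1
      rw [mul_pow, Real.sq_sqrt hKP]
      ring
    have hfin : ∏ i, (6 * τ i / a) ≤ (12 * Real.sqrt ((K : ℝ) / P)) ^ P := by
      have h6 := Real.sqrt_le_sqrt (le_trans hXsq (le_of_eq hY.symm))
      rwa [Real.sqrt_sq hX0, Real.sqrt_sq (by positivity)] at h6
    calc ((C.image g).card : ℝ) ≤ (C.card : ℝ) := h1
      _ ≤ ∏ i, (6 * τ i * ε / (a*ε)) := hCcard
      _ = ∏ i, (6 * τ i / a) := h2
      _ ≤ (12 * Real.sqrt ((K : ℝ) / P)) ^ P := hfin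
end
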